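/- Let H be a ℤ-graded module over the polynomial ring k[g] (with g in degree 1) which is left bounded (H_n = 0 for n ≪ 0) and locally finite (each H_n is finite dimensional over k). If the kernel of the multiplication map g : H → H is finite dimensional over k, then the g-torsion submodule {h ∈ H : g^n h = 0 for some n ≥ 1} of H is also finite dimensional over k. -/

import Mathlib

/-!
STATEMENT 0: Let `H` be a ℤ-graded module over the polynomial ring `k[g]` (with `g` in degree 1,
here `g = Polynomial.X`), which is left bounded and locally finite.  If the kernel of
multiplication by `g` on `H` is finite dimensional over `k`, then the `g`-torsion submodule
`{h ∈ H : g^n h = 0 for some n ≥ 1}` is also finite dimensional over `k`.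

A ℤ-graded module over `k[g]` is encoded as a `k[g]`-module `H` together with an internal
direct sum decomposition `ℋ : ℤ → Submodule k H` such that `g • ℋ n ⊆ ℋ (n+1)`.
-/

set_option synthInstance.maxHeartbeats 400000

open Polynomial

theorem stmt_0 (k : Type*) [Field k] (H : Type*) [AddCommGroup H]
    [Module (Polynomial k) H] [Module k H] [IsScalarTower k (Polynomial k) H]
    -- the grading
    (ℋ : ℤ → Submodule k H) (hinternal : DirectSum.IsInternal ℋ)
    (hdeg : ∀ (n : ℤ), ∀ x ∈ ℋ n, (X : Polynomial k) • x ∈ ℋ (n + 1))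
    -- locally finite
    (hlf : ∀ n : ℤ, FiniteDimensional k (ℋ n))
    -- left bounded
    (hlb : ∃ N : ℤ, ∀ n < N, ℋ n = ⊥)
    -- the multiplication map `·g` as a `k`-linear endomorphism of `H`
    (g : Module.End k H) (hgdef : ∀ x : H, g x = (X : Polynomial k) • x)
    -- its kernel is finite dimensional
    (hker : FiniteDimensional k (LinearMap.ker g)) :
    -- then the g-torsion submodule is finite dimensional
    FiniteDimensional k ↥(⨆ m : ℕ, LinearMap.ker (g ^ (m + 1))) := by
  classical
  obtain ⟨N, hN⟩ := hlb
  haveI : DirectSum.Decomposition ℋ := hinternal.chooseDecomposition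
  -- `g` maps `ℋ n` into `ℋ (n+1)`.
  have hg1 : ∀ (n : ℤ), ∀ x ∈ ℋ n, g x ∈ ℋ (n + 1) := fun n x hx => by
    rw [hgdef]; exact hdeg n x hx
  -- `g^m` maps `ℋ n` into `ℋ (n+m)`.
  have hgpow : ∀ (m : ℕ) (n : ℤ), ∀ x ∈ ℋ n, (g ^ m) x ∈ ℋ (n + m) := by
    intro m
    induction m with
    | zero => intro n x hx; simpa using hx
    | succ m ih =>
      intro n x hx
      have : (g ^ (m + 1)) x = g ((g ^ m) x) := by
        rw [pow_succ'];rfl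
      rw [this]
      have := hg1 (n + m) _ (ih n x hx)
      convert this using 2
      push_cast; ring
  -- `g` commutes with taking homogeneous components.
  have hcomm1 : ∀ (x : H) (n : ℤ),
      ((DirectSum.decompose ℋ (g x) (n + 1) : ℋ (n + 1)) : H)
        = g ((DirectSum.decompose ℋ x n : ℋ n) : H) := by
    intro x
    induction x using DirectSum.Decomposition.inductionOn ℋ with
    | zero => intro n; simp
    | @homogeneous i m =>
      intro n
      rcases m with ⟨x, hx⟩
      by_cases h : i = n
      · subst h
        rw [DirectSum.decompose_of_mem_same ℋ hx,
          DirectSum.decompose_of_mem_same ℋ (hg1 i x hx)]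
      · rw [DirectSum.decompose_of_mem_ne ℋ hx h,
          DirectSum.decompose_of_mem_ne ℋ (hg1 i x hx) (by omega), map_zero]
    | add a b ha hb =>
      intro n
      simp only [map_add, DirectSum.decompose_add, DirectSum.add_apply, Submodule.coe_add, ha n, hb n]
  -- `g^m` commutes with taking homogeneous components.
  have hcomm : ∀ (m : ℕ) (x : H) (n : ℤ),
      ((DirectSum.decompose ℋ ((g ^ m) x) (n + m) : ℋ (n + m)) : H)
        = (g ^ m) ((DirectSum.decompose ℋ x n : ℋ n) : H) := by
    intro m
    induction m with
    | zero =>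
      intro x n
      exact congrArg (fun i : ℤ => ((DirectSum.decompose ℋ x i : ℋ i) : H)) (by norm_num)
    | succ m ih =>
      intro x n
      have h1 : (g ^ (m + 1)) x = (g ^ m) (g x) := by rw [pow_succ]; rfl
      have h2 : (n : ℤ) + (m + 1 : ℕ) = (n + 1) + m := by push_cast; ring
      calc ((DirectSum.decompose ℋ ((g ^ (m+1)) x) (n + (m+1 : ℕ)) : _) : H)
          = ((DirectSum.decompose ℋ ((g ^ m) (g x)) ((n + 1) + m) : _) : H) := by
            rw [h1]; congr 1 <;> rw [h2]
        _ = (g ^ m) ((DirectSum.decompose ℋ (g x) (n + 1) : _) : H) := ih (g x) (n + 1)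
        _ = (g ^ m) (g ((DirectSum.decompose ℋ x n : _) : H)) := by rw [hcomm1]
        _ = (g ^ (m + 1)) ((DirectSum.decompose ℋ x n : _) : H) := by rw [pow_succ]; rfl
  -- the set of degrees where `ker g` has a nonzero homogeneous element is finite
  set S : Set ℤ := {n | ∃ x : H, x ∈ ℋ n ∧ g x = 0 ∧ x ≠ 0} with hS
  have hSfin : S.Finite := by
    by_contra hinf
    haveI : Infinite S := Set.infinite_coe_iff.mpr hinf
    choose v hv1 hv2 hv3 using fun n : S => n.2
    have hind : iSupIndep fun n : S => ℋ n :=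
      hinternal.submodule_iSupIndep.comp Subtype.coe_injective
    have hli : LinearIndependent k v := hind.linearIndependent _ hv1 hv3
    set w : S → LinearMap.ker g := fun n => ⟨v n, by simpa [LinearMap.mem_ker] using hv2 n⟩
    have hliw : LinearIndependent k w := by
      apply LinearIndependent.of_comp (LinearMap.ker g).subtype
      convert hli
      rfl
    exact Module.Finite.not_linearIndependent_of_infinite w hliw
  obtain ⟨D, hD⟩ := hSfin.bddAbove
  -- the candidate finite dimensional submodule
  set T : Submodule k H := (Finset.Icc N D).sup ℋ with hT
  haveI hTfd : FiniteDimensional k T := Submodule.finiteDimensional_finset_sup _ _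
  have key : (⨆ m : ℕ, LinearMap.ker (g ^ (m + 1))) ≤ T := by
    apply iSup_le
    intro m x hx
    rw [LinearMap.mem_ker] at hx
    -- each homogeneous component of `x` is also killed by `g^(m+1)`
    have hxn : ∀ n : ℤ, (g ^ (m + 1)) ((DirectSum.decompose ℋ x n : ℋ n) : H) = 0 := by
      intro n
      rw [← hcomm (m + 1) x n, hx]
      simp
    -- each homogeneous component lies in `T`
    have hmem : ∀ n : ℤ, ((DirectSum.decompose ℋ x n : ℋ n) : H) ∈ T := by
      intro n
      set y : H := ((DirectSum.decompose ℋ x n : ℋ n) : H) with hy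
      by_cases h0 : y = 0
      · rw [h0]; exact zero_mem _
      have hyn : y ∈ ℋ n := (DirectSum.decompose ℋ x n).2
      -- n ≥ N
      have hnN : N ≤ n := by
        by_contra hc
        exact h0 (by simpa [hN n (by omega)] using hyn)
      -- n ≤ D : take the minimal power killing y
      have hex : ∃ j : ℕ, (g ^ (j + 1)) y = 0 := ⟨m, hxn n⟩
      set j := Nat.find hex with hj
      have hkill : (g ^ (j + 1)) y = 0 := Nat.find_spec hex
      have hsurv : (g ^ j) y ≠ 0 := by
        rcases Nat.eq_zero_or_pos j with hz | hz
        · rw [hz]; simpa using h0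
        · intro hc
          apply Nat.find_min hex (show j - 1 < j by omega)
          have hj1 : j - 1 + 1 = j := by omega
          rw [hj1]; exact hc
      have hzmem : (g ^ j) y ∈ ℋ (n + j) := hgpow j n y hyn
      have hker0 : g ((g ^ j) y) = 0 := by
        rw [← hkill, pow_succ']; rfl
      have hnj : (n + j : ℤ) ∈ S := ⟨(g ^ j) y, hzmem, hker0, hsurv⟩
      have hnD : n ≤ D := le_trans (by omega) (hD hnj)
      exact Finset.le_sup (f := ℋ) (Finset.mem_Icc.mpr ⟨hnN, hnD⟩) hyn
    -- sum the components
    rw [← DirectSum.sum_support_decompose ℋ x]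
    exact Submodule.sum_mem _ fun i _ => hmem i
  exact Submodule.finiteDimensional_of_le key
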